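/- Let f : X → X be an expansive homeomorphism of a compact metric space X. If X is infinite, then there exist x, y ∈ X with x ≠ y such that lim_{i→∞} d(f^i(x), f^i(y)) = 0. -/

import Mathlib

open Metric Filter Function Set

variable {X : Type*} [MetricSpace X]

/-- A δ-chain of length ≥ 1 from x to y. -/
def IsChain' (f : X → X) (δ : ℝ) (x y : X) : Prop :=
  ∃ k : ℕ, 1 ≤ k ∧ ∃ c : ℕ → X, c 0 = x ∧ c k = y ∧ ∀ i < k, dist (f (c i)) (c (i + 1)) ≤ δ

/-- The chain recurrent set. -/
def CR (f : X → X) : Set X := {x | ∀ δ > 0, IsChain' f δ x x}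

/-- Sensitive points of f restricted to S. -/
def SenOn (f : X → X) (S : Set X) : Set X :=
  {x | x ∈ S ∧ ∃ a > 0, ∀ δ > 0, ∃ y ∈ S, dist x y ≤ δ ∧ ∃ i : ℕ, a < dist (f^[i] x) (f^[i] y)}

/-- Equicontinuity of a map (uniform over all forward iterates). -/
def Equicont (f : X → X) : Prop :=
  ∀ ε > 0, ∃ δ > 0, ∀ z w : X, dist z w ≤ δ → ∀ i : ℕ, dist (f^[i] z) (f^[i] w) ≤ ε

/-- The i-th iterate (i ∈ ℤ) of a homeomorphism. -/
def ziter (f : X ≃ₜ X) (i : ℤ) : X → X :=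
  fun x => if 0 ≤ i then (⇑f)^[i.toNat] x else (⇑f.symm)^[(-i).toNat] x

/-- Expansiveness of a homeomorphism. -/
def Expansive (f : X ≃ₜ X) : Prop :=
  ∃ e > 0, ∀ x y : X, (∀ i : ℤ, dist (ziter f i x) (ziter f i y) ≤ e) → x = y

/-- e is an expansive constant for f on S. -/
def ExpConstOn (f : X ≃ₜ X) (S : Set X) (e : ℝ) : Prop :=
  ∀ x y : X, (∀ i : ℤ, ziter f i x ∈ S) → (∀ i : ℤ, ziter f i y ∈ S) →
    (∀ i : ℤ, dist (ziter f i x) (ziter f i y) ≤ e) → x = y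

/-- Periodic points. -/
def Per (f : X → X) : Set X := {x | ∃ j : ℕ, 1 ≤ j ∧ f^[j] x = x}

/-- Closed r-neighborhood of a set. -/
def nbd (r : ℝ) (S : Set X) : Set X := {y | infDist y S ≤ r}

lemma ziter_continuous (f : X ≃ₜ X) (i : ℤ) : Continuous (ziter f i) := by
  unfold ziter
  by_cases h : 0 ≤ i
  · simp only [if_pos h]; exact f.continuous.iterate _
  · simp only [if_neg h]; exact f.symm.continuous.iterate _

lemma ziter_iterate (f : X ≃ₜ X) (i : ℤ) (n : ℕ) (h : 0 ≤ (n : ℤ) + i) (x : X) :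
    ziter f i ((⇑f)^[n] x) = (⇑f)^[((n : ℤ) + i).toNat] x := by
  cases i with
  | ofNat m =>
      simp only [ziter, Int.ofNat_eq_coe, Int.ofNat_nonneg, if_true, Int.toNat_natCast]
      rw [← Function.iterate_add_apply]
      congr 1
      omega
  | negSucc m =>
      rw [Int.negSucc_eq] at h ⊢
      have hmn : m + 1 ≤ n := by omega
      have hcond : ¬ (0 ≤ -((m : ℤ) + 1)) := by omega
      simp only [ziter, hcond, if_false]
      have h1 : (- -((m : ℤ) + 1)).toNat = m + 1 := by omega
      have h2 : ((n : ℤ) + -((m : ℤ) + 1)).toNat = n - (m + 1) := by omega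
      rw [h1, h2]
      have h3 : (⇑f)^[n] x = (⇑f)^[m+1] ((⇑f)^[n - (m+1)] x) := by
        rw [← Function.iterate_add_apply]
        congr 1
        omega
      rw [h3]
      exact (Function.LeftInverse.iterate f.symm_apply_apply (m+1)) _

lemma asymptotic_of_bounded [CompactSpace X] (f : X ≃ₜ X) {e : ℝ} (he : 0 < e)
    (hE : ∀ x y : X, (∀ i : ℤ, dist (ziter f i x) (ziter f i y) ≤ e) → x = y)
    (x y : X) (hb : ∀ n : ℕ, dist ((⇑f)^[n] x) ((⇑f)^[n] y) ≤ e) :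
    Tendsto (fun n : ℕ => dist ((⇑f)^[n] x) ((⇑f)^[n] y)) atTop (nhds 0) := by
  by_contra hT
  rw [Metric.tendsto_atTop] at hT
  push_neg at hT
  obtain ⟨ε, hε, hfr⟩ := hT
  have hfr' : ∀ N : ℕ, ∃ n ≥ N, ε ≤ dist ((⇑f)^[n] x) ((⇑f)^[n] y) := by
    intro N
    obtain ⟨n, hn, h⟩ := hfr N
    refine ⟨n, hn, ?_⟩
    rwa [Real.dist_eq, sub_zero, abs_of_nonneg dist_nonneg] at h
  obtain ⟨φ, hφ, hφε⟩ := Filter.extraction_of_frequently_atTop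
    (Filter.frequently_atTop.mpr hfr')
  obtain ⟨p, ψ₁, hψ₁, hp⟩ := CompactSpace.tendsto_subseq (fun k => (⇑f)^[φ k] x)
  obtain ⟨q, ψ₂, hψ₂, hq⟩ := CompactSpace.tendsto_subseq
    (fun k => (⇑f)^[φ (ψ₁ k)] y)
  set m : ℕ → ℕ := fun k => φ (ψ₁ (ψ₂ k)) with hm
  have hmmono : StrictMono m := hφ.comp (hψ₁.comp hψ₂)
  have hpx : Tendsto (fun k => (⇑f)^[m k] x) atTop (nhds p) := hp.comp hψ₂.tendsto_atTop
  have hqy : Tendsto (fun k => (⇑f)^[m k] y) atTop (nhds q) := hq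
  have hdist : Tendsto (fun k => dist ((⇑f)^[m k] x) ((⇑f)^[m k] y)) atTop
      (nhds (dist p q)) := hpx.dist hqy
  have hεpq : ε ≤ dist p q :=
    ge_of_tendsto hdist (Eventually.of_forall fun k => hφε (ψ₁ (ψ₂ k)))
  have hle : ∀ i : ℤ, dist (ziter f i p) (ziter f i q) ≤ e := by
    intro i
    have hcp : Tendsto (fun k => ziter f i ((⇑f)^[m k] x)) atTop (nhds (ziter f i p)) :=
      ((ziter_continuous f i).tendsto p).comp hpx
    have hcq : Tendsto (fun k => ziter f i ((⇑f)^[m k] y)) atTop (nhds (ziter f i q)) :=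
      ((ziter_continuous f i).tendsto q).comp hqy
    refine le_of_tendsto (hcp.dist hcq) ?_
    filter_upwards [eventually_ge_atTop ((-i).toNat)] with k hk
    have hki : 0 ≤ (m k : ℤ) + i := by
      have := hmmono.le_apply (x := k)
      omega
    rw [ziter_iterate f i (m k) hki x, ziter_iterate f i (m k) hki y]
    exact hb _
  have : p = q := hE p q hle
  rw [this, dist_self] at hεpq
  linarith

lemma unif_exp [CompactSpace X] (f : X ≃ₜ X) {c : ℝ}
    (hpe : ∀ x y : X, x ≠ y → ∃ n : ℕ, c < dist ((⇑f)^[n] x) ((⇑f)^[n] y))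
    {ε : ℝ} (hε : 0 < ε) :
    ∃ N : ℕ, ∀ x y : X, ε ≤ dist x y → ∃ n ≤ N, c < dist ((⇑f)^[n] x) ((⇑f)^[n] y) := by
  set K : Set (X × X) := {p | ε ≤ dist p.1 p.2} with hK
  have hKcl : IsClosed K := isClosed_le continuous_const continuous_dist
  have hKc : IsCompact K := hKcl.isCompact
  set U : ℕ → Set (X × X) := fun n => {p | c < dist ((⇑f)^[n] p.1) ((⇑f)^[n] p.2)} with hU
  have hUo : ∀ n, IsOpen (U n) := by
    intro n
    exact isOpen_lt continuous_const
      (((f.continuous.iterate n).comp continuous_fst).dist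
        ((f.continuous.iterate n).comp continuous_snd))
  have hcov : K ⊆ ⋃ n, U n := by
    rintro ⟨a, b⟩ hab
    have hab' : ε ≤ dist a b := hab
    have hne : a ≠ b := by
      intro h
      subst h
      rw [dist_self] at hab'
      linarith
    obtain ⟨n, hn⟩ := hpe a b hne
    exact Set.mem_iUnion.mpr ⟨n, hn⟩
  obtain ⟨t, ht⟩ := hKc.elim_finite_subcover U hUo hcov
  refine ⟨t.sup id, fun x y hxy => ?_⟩
  have := ht (show (x, y) ∈ K from hxy)
  rw [Set.mem_iUnion₂] at this
  obtain ⟨n, hnt, hn⟩ := this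
  exact ⟨n, Finset.le_sup (f := id) hnt, hn⟩

lemma unif_cont_back [CompactSpace X] (f : X ≃ₜ X) {c : ℝ} (hc : 0 < c) (N : ℕ) :
    ∃ δ > 0, ∀ x y : X, dist x y ≤ δ →
      ∀ j ≤ N, dist ((⇑f.symm)^[j] x) ((⇑f.symm)^[j] y) ≤ c := by
  induction N with
  | zero =>
      exact ⟨c, hc, fun x y h j hj => by
        interval_cases j
        simpa using h⟩
  | succ N ih =>
      obtain ⟨δ, hδ, H⟩ := ih
      have hu : UniformContinuous ⇑f.symm :=
        CompactSpace.uniformContinuous_of_continuous f.symm.continuous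
      rw [Metric.uniformContinuous_iff] at hu
      obtain ⟨δ₂, hδ₂, H₂⟩ := hu δ hδ
      refine ⟨min (δ₂ / 2) c, by positivity, fun x y h j hj => ?_⟩
      cases j with
      | zero => simpa using h.trans (min_le_right _ _)
      | succ k =>
          rw [Function.iterate_succ_apply, Function.iterate_succ_apply]
          have h1 : dist x y < δ₂ := lt_of_le_of_lt (h.trans (min_le_left _ _)) (by linarith)
          exact H _ _ (H₂ h1).le k (by omega)

lemma back_small (f : X ≃ₜ X) {c ε : ℝ} (N : ℕ)
    (hN : ∀ x y : X, ε ≤ dist x y → ∃ n ≤ N, c < dist ((⇑f)^[n] x) ((⇑f)^[n] y))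
    (x y : X) (n : ℕ) (hn : N ≤ n)
    (hb : ∀ j ≤ n, dist ((⇑f.symm)^[j] x) ((⇑f.symm)^[j] y) ≤ c) :
    dist ((⇑f.symm)^[n] x) ((⇑f.symm)^[n] y) < ε := by
  by_contra h
  push_neg at h
  obtain ⟨m, hm, hsep⟩ := hN _ _ h
  have key : ∀ z : X, (⇑f)^[m] ((⇑f.symm)^[n] z) = (⇑f.symm)^[n - m] z := by
    intro z
    have h3 : (⇑f.symm)^[n] z = (⇑f.symm)^[m] ((⇑f.symm)^[n - m] z) := by
      rw [← Function.iterate_add_apply]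
      congr 1
      omega
    rw [h3]
    exact (Function.LeftInverse.iterate f.apply_symm_apply m) _
  rw [key x, key y] at hsep
  exact absurd (hb (n - m) (by omega)) (not_le.mpr hsep)

lemma false_of_pe [CompactSpace X] (f : X ≃ₜ X) {c : ℝ} (hc : 0 < c)
    (hpe : ∀ x y : X, x ≠ y → ∃ n : ℕ, c < dist ((⇑f)^[n] x) ((⇑f)^[n] y))
    (hinf : Infinite X) : False := by
  classical
  -- δs : closeness ensuring one backward step stays c-close
  obtain ⟨δs, hδs, Hs⟩ := unif_cont_back f hc 1
  obtain ⟨N₁, HN₁⟩ := unif_exp f hpe hδs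
  -- persistence of backward c-boundedness
  have persist : ∀ x y : X, (∀ j ≤ N₁, dist ((⇑f.symm)^[j] x) ((⇑f.symm)^[j] y) ≤ c) →
      ∀ j, dist ((⇑f.symm)^[j] x) ((⇑f.symm)^[j] y) ≤ c := by
    intro x y h0 j
    induction j using Nat.strong_induction_on with
    | _ j ih =>
      by_cases hj : j ≤ N₁
      · exact h0 j hj
      · push_neg at hj
        obtain ⟨n, rfl⟩ : ∃ n, j = n + 1 := ⟨j - 1, by omega⟩
        have hb : ∀ k ≤ n, dist ((⇑f.symm)^[k] x) ((⇑f.symm)^[k] y) ≤ c :=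
          fun k hk => ih k (by omega)
        have hsmall : dist ((⇑f.symm)^[n] x) ((⇑f.symm)^[n] y) < δs :=
          back_small f N₁ HN₁ x y n (by omega) hb
        have h1 := Hs _ _ hsmall.le 1 le_rfl
        simpa [Function.iterate_succ_apply'] using h1
  -- δ₀ : closeness ensuring N₁ backward steps stay c-close
  obtain ⟨δ₀, hδ₀, H₀⟩ := unif_cont_back f hc N₁
  -- finite cover by δ₀/2 balls
  obtain ⟨t, -, htf, htcov⟩ :=
    finite_cover_balls_of_compact (isCompact_univ (X := X)) (show 0 < δ₀ / 2 by linarith)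
  set T : Finset X := htf.toFinset with hT
  obtain ⟨S, hScard⟩ := Infinite.exists_subset_card_eq X (T.card + 1)
  have hScard2 : 1 < S.card := by
    have hT0 : T.card = 0 → False := by
      intro h0
      have : (T : Set X) = ∅ := by simp [Finset.card_eq_zero.mp h0]
      obtain ⟨x⟩ := (inferInstance : Nonempty X)
      have := htcov (Set.mem_univ x)
      rw [Set.mem_iUnion₂] at this
      obtain ⟨p, hp, -⟩ := this
      have : p ∈ T := by simp [hT, htf.mem_toFinset, hp]
      simp [Finset.card_eq_zero.mp h0] at this
    have hT0' : T.card ≠ 0 := fun h => hT0 h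
    omega
  obtain ⟨a0, ha0, b0, hb0, hab0⟩ := Finset.one_lt_card.mp hScard2
  have hSne : (S.offDiag).Nonempty :=
    ⟨(a0, b0), Finset.mem_offDiag.mpr ⟨ha0, hb0, hab0⟩⟩
  set εm : ℝ := S.offDiag.inf' hSne (fun p => dist p.1 p.2) with hεm
  have hεmpos : 0 < εm := by
    rw [hεm, Finset.lt_inf'_iff]
    rintro ⟨a, b⟩ hab
    rw [Finset.mem_offDiag] at hab
    exact dist_pos.mpr hab.2.2
  obtain ⟨Nε, HNε⟩ := unif_exp f hpe hεmpos
  -- centers map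
  have hcen : ∀ z : X, ∃ p ∈ t, dist z p < δ₀ / 2 := by
    intro z
    have := htcov (Set.mem_univ z)
    rw [Set.mem_iUnion₂] at this
    obtain ⟨p, hp, hball⟩ := this
    exact ⟨p, hp, mem_ball.mp hball⟩
  set g : X → X := fun s => (hcen ((⇑f)^[Nε] s)).choose with hg
  have hgmem : ∀ s, g s ∈ T := fun s => by
    have := (hcen ((⇑f)^[Nε] s)).choose_spec.1
    simp [hT, htf.mem_toFinset, hg, this]
  have hgdist : ∀ s, dist ((⇑f)^[Nε] s) (g s) < δ₀ / 2 :=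
    fun s => (hcen ((⇑f)^[Nε] s)).choose_spec.2
  obtain ⟨a, haS, b, hbS, hab, hgab⟩ :=
    Finset.exists_ne_map_eq_of_card_lt_of_maps_to
      (show T.card < S.card by omega) (fun s _ => hgmem s)
  -- f^[Nε] a and f^[Nε] b are δ₀-close
  have hclose : dist ((⇑f)^[Nε] a) ((⇑f)^[Nε] b) ≤ δ₀ := by
    have h1 := hgdist a
    have h2 := hgdist b
    rw [hgab] at h1
    calc dist ((⇑f)^[Nε] a) ((⇑f)^[Nε] b)
        ≤ dist ((⇑f)^[Nε] a) (g b) + dist ((⇑f)^[Nε] b) (g b) := dist_triangle_right _ _ _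
      _ ≤ δ₀ := by linarith
  -- hence their backward n-th images are εm-close for n = Nε
  have hbdd : ∀ j, dist ((⇑f.symm)^[j] ((⇑f)^[Nε] a)) ((⇑f.symm)^[j] ((⇑f)^[Nε] b)) ≤ c :=
    persist _ _ (fun j hj => H₀ _ _ hclose j hj)
  have hfin : dist ((⇑f.symm)^[Nε] ((⇑f)^[Nε] a)) ((⇑f.symm)^[Nε] ((⇑f)^[Nε] b)) < εm :=
    back_small f Nε HNε _ _ Nε le_rfl (fun j _ => hbdd j)
  have hid : ∀ z : X, (⇑f.symm)^[Nε] ((⇑f)^[Nε] z) = z :=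
    fun z => (Function.LeftInverse.iterate f.symm_apply_apply Nε) z
  rw [hid a, hid b] at hfin
  have : εm ≤ dist a b := by
    have hmem : (a, b) ∈ S.offDiag := Finset.mem_offDiag.mpr ⟨haS, hbS, hab⟩
    have := Finset.inf'_le (f := fun p : X × X => dist p.1 p.2) hmem
    exact this
  linarith
theorem stmt_3 [CompactSpace X] (f : X ≃ₜ X) (hexp : Expansive f) (hinf : Infinite X) :
    ∃ x y : X, x ≠ y ∧
      Filter.Tendsto (fun i : ℕ => dist ((⇑f)^[i] x) ((⇑f)^[i] y)) atTop (nhds 0) := by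
  obtain ⟨e, he, hE⟩ := hexp
  by_cases hp : ∃ x y : X, x ≠ y ∧ ∀ n : ℕ, dist ((⇑f)^[n] x) ((⇑f)^[n] y) ≤ e
  · obtain ⟨x, y, hxy, hb⟩ := hp
    exact ⟨x, y, hxy, asymptotic_of_bounded f he hE x y hb⟩
  · push_neg at hp
    exact absurd hinf (fun hinf' => (false_of_pe f he
      (fun x y hxy => by
        obtain ⟨n, hn⟩ := hp x y hxy
        exact ⟨n, hn⟩) hinf'))
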